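/- arXiv:2603.24509 — 5 statements merged into one kernel-verified Lean document; each statement's English description precedes it below -/
import Mathlib

section
/- Let Q be an n×n real symmetric matrix, N a p×q real matrix, X an n×p real matrix, Y a q×n real matrix, and G a q×q real matrix with G + Gᵀ positive definite. If the (n+q)×(n+q) block matrix [[Q, X N + Yᵀ Gᵀ], [Nᵀ Xᵀ + G Y, −(G + Gᵀ)]] is negative definite, then Q + X N Y + (X N Y)ᵀ is negative definite. -/
open Matrix

/-- A real symmetric matrix is negative definite if its quadratic form is
negative on all nonzero vectors. -/
def NegDef {n : Type*} [Fintype n] (M : Matrix n n ℝ) : Prop :=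
  M.IsSymm ∧ ∀ x : n → ℝ, x ≠ 0 → x ⬝ᵥ M.mulVec x < 0

/-- Overbounding theorem (Theorem 3 / \cite{sebe2018sequential}): if the block
matrix `[[Q, X N + Yᵀ Gᵀ], [Nᵀ Xᵀ + G Y, −(G + Gᵀ)]]` is negative definite,
where `G + Gᵀ ≻ 0`, then `Q + He(X N Y) ≺ 0`. -/
theorem stmt_0 {n p q : ℕ}
    (Q : Matrix (Fin n) (Fin n) ℝ) (hQ : Q.IsSymm)
    (N : Matrix (Fin p) (Fin q) ℝ)
    (X : Matrix (Fin n) (Fin p) ℝ) (Y : Matrix (Fin q) (Fin n) ℝ)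
    (G : Matrix (Fin q) (Fin q) ℝ) (hG : (G + Gᵀ).PosDef)
    (h : NegDef (Matrix.fromBlocks Q (X * N + Yᵀ * Gᵀ) (Nᵀ * Xᵀ + G * Y) (-(G + Gᵀ)))) :
    NegDef (Q + X * N * Y + (X * N * Y)ᵀ) := by
  constructor
  · unfold Matrix.IsSymm at hQ ⊢
    rw [transpose_add, transpose_add, transpose_transpose, hQ]
    abel
  · intro x hx
    have hz : (Sum.elim x (Y *ᵥ x) : Fin n ⊕ Fin q → ℝ) ≠ 0 := by
      intro hc
      apply hx
      funext i
      exact congrFun hc (Sum.inl i)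
    have key := h.2 _ hz
    rw [fromBlocks_mulVec, sumElim_dotProduct_sumElim] at key
    simp only [Sum.elim_comp_inl, Sum.elim_comp_inr] at key
    set u : Fin q → ℝ := Y *ᵥ x with hu
    -- abbreviations
    have e1 : x ⬝ᵥ (Yᵀ * Gᵀ) *ᵥ u = u ⬝ᵥ Gᵀ *ᵥ u := by
      rw [← Matrix.mulVec_mulVec, Matrix.dotProduct_mulVec x Yᵀ, Matrix.vecMul_transpose, ← hu]
    have e2 : u ⬝ᵥ (G * Y) *ᵥ x = u ⬝ᵥ G *ᵥ u := by
      rw [← Matrix.mulVec_mulVec, ← hu]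
    have e3 : u ⬝ᵥ (Nᵀ * Xᵀ) *ᵥ x = x ⬝ᵥ (X * N) *ᵥ u := by
      rw [Matrix.dotProduct_mulVec, ← Matrix.transpose_mul, Matrix.vecMul_transpose,
        dotProduct_comm]
    have e4 : x ⬝ᵥ (X * N * Y) *ᵥ x = x ⬝ᵥ (X * N) *ᵥ u := by
      rw [← Matrix.mulVec_mulVec, ← hu]
    have e5 : x ⬝ᵥ (X * N * Y)ᵀ *ᵥ x = x ⬝ᵥ (X * N) *ᵥ u := by
      rw [Matrix.dotProduct_mulVec, Matrix.vecMul_transpose, dotProduct_comm, e4]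
    have e6 : u ⬝ᵥ (-(G + Gᵀ)) *ᵥ u = -(u ⬝ᵥ G *ᵥ u) - u ⬝ᵥ Gᵀ *ᵥ u := by
      rw [Matrix.neg_mulVec, dotProduct_neg, Matrix.add_mulVec, dotProduct_add]
      ring
    simp only [Matrix.add_mulVec, dotProduct_add, e1, e2, e3, e6] at key
    calc x ⬝ᵥ (Q + X * N * Y + (X * N * Y)ᵀ) *ᵥ x
        = x ⬝ᵥ Q *ᵥ x + x ⬝ᵥ (X * N) *ᵥ u + x ⬝ᵥ (X * N) *ᵥ u := by
          simp only [Matrix.add_mulVec, dotProduct_add, e4, e5]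
      _ < 0 := by linarith
end

section
/- Let N be a p×q real matrix, X an n×p real matrix, Y a q×n real matrix, and G a q×q real matrix with G + Gᵀ positive definite. Then (X N + Yᵀ Gᵀ)(G + Gᵀ)⁻¹(Nᵀ Xᵀ + G Y) − (X N Y + YᵀNᵀXᵀ) = (X N − Yᵀ G)(G + Gᵀ)⁻¹(Nᵀ Xᵀ − Gᵀ Y). In particular, X N Y + Yᵀ Nᵀ Xᵀ ⪯ (X N + Yᵀ Gᵀ)(G + Gᵀ)⁻¹(Nᵀ Xᵀ + G Y), i.e. the difference is positive semidefinite. -/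
open Matrix

lemma aux_sq {n q : ℕ} (a : Matrix (Fin n) (Fin q) ℝ) (Y : Matrix (Fin q) (Fin n) ℝ)
    (G : Matrix (Fin q) (Fin q) ℝ) (hG : (G + Gᵀ).PosDef) :
    (a + Yᵀ * Gᵀ) * (G + Gᵀ)⁻¹ * (aᵀ + G * Y) - (a * Y + Yᵀ * aᵀ)
      = (a - Yᵀ * G) * (G + Gᵀ)⁻¹ * (aᵀ - Gᵀ * Y) := by
  set S := G + Gᵀ with hS
  have hdet : IsUnit S.det := hG.det_pos.ne'.isUnit
  have hSi : S⁻¹ * S = 1 := nonsing_inv_mul S hdet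
  have hSi' : S * S⁻¹ = 1 := mul_nonsing_inv S hdet
  have hGt : Gᵀ = S - G := (add_sub_cancel_left G Gᵀ).symm
  have hkey : Gᵀ * S⁻¹ * G = G * S⁻¹ * Gᵀ := by
    have h1 : Gᵀ * S⁻¹ * G = G - G * S⁻¹ * G := by
      rw [hGt, sub_mul, sub_mul, hSi', one_mul]
    have h2 : G * S⁻¹ * Gᵀ = G - G * S⁻¹ * G := by
      rw [hGt, mul_sub, mul_assoc G S⁻¹ S, hSi, mul_one]
    rw [h1, h2]
  have hGS : G * S⁻¹ + Gᵀ * S⁻¹ = 1 := by rw [← add_mul, ← hS, hSi']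
  have hSG : S⁻¹ * G + S⁻¹ * Gᵀ = 1 := by rw [← mul_add, ← hS, hSi]
  have E1 : a * (S⁻¹ * (G * Y)) + a * (S⁻¹ * (Gᵀ * Y)) = a * Y := by
    have h : S⁻¹ * (G * Y) + S⁻¹ * (Gᵀ * Y) = Y := by
      rw [← Matrix.mul_assoc, ← Matrix.mul_assoc, ← Matrix.add_mul, hSG, Matrix.one_mul]
    rw [← Matrix.mul_add, h]
  have E2 : Yᵀ * (Gᵀ * (S⁻¹ * aᵀ)) + Yᵀ * (G * (S⁻¹ * aᵀ)) = Yᵀ * aᵀ := by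
    have h : Gᵀ * (S⁻¹ * aᵀ) + G * (S⁻¹ * aᵀ) = aᵀ := by
      rw [← Matrix.mul_assoc, ← Matrix.mul_assoc, ← Matrix.add_mul, add_comm (Gᵀ * S⁻¹),
        hGS, Matrix.one_mul]
    rw [← Matrix.mul_add, h]
  have E3 : Yᵀ * (Gᵀ * (S⁻¹ * (G * Y))) = Yᵀ * (G * (S⁻¹ * (Gᵀ * Y))) := by
    have h : Gᵀ * (S⁻¹ * (G * Y)) = G * (S⁻¹ * (Gᵀ * Y)) := by
      calc Gᵀ * (S⁻¹ * (G * Y)) = Gᵀ * S⁻¹ * G * Y := by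
            rw [Matrix.mul_assoc, Matrix.mul_assoc]
        _ = G * S⁻¹ * Gᵀ * Y := by rw [hkey]
        _ = G * (S⁻¹ * (Gᵀ * Y)) := by rw [Matrix.mul_assoc, Matrix.mul_assoc]
    rw [h]
  simp only [Matrix.add_mul, Matrix.mul_add, Matrix.sub_mul, Matrix.mul_sub, Matrix.mul_assoc]
  rw [← E1, ← E2, E3]
  abel

/-- Completion-of-squares identity behind the overbounding theorem, together with
the resulting semidefinite bound
`X N Y + Yᵀ Nᵀ Xᵀ ⪯ (X N + Yᵀ Gᵀ)(G + Gᵀ)⁻¹(Nᵀ Xᵀ + G Y)`. -/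
theorem stmt_1 {n p q : ℕ}
    (N : Matrix (Fin p) (Fin q) ℝ)
    (X : Matrix (Fin n) (Fin p) ℝ) (Y : Matrix (Fin q) (Fin n) ℝ)
    (G : Matrix (Fin q) (Fin q) ℝ) (hG : (G + Gᵀ).PosDef) :
    (X * N + Yᵀ * Gᵀ) * (G + Gᵀ)⁻¹ * (Nᵀ * Xᵀ + G * Y) - (X * N * Y + Yᵀ * Nᵀ * Xᵀ)
        = (X * N - Yᵀ * G) * (G + Gᵀ)⁻¹ * (Nᵀ * Xᵀ - Gᵀ * Y) ∧
    ((X * N + Yᵀ * Gᵀ) * (G + Gᵀ)⁻¹ * (Nᵀ * Xᵀ + G * Y)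
        - (X * N * Y + Yᵀ * Nᵀ * Xᵀ)).PosSemidef := by
  have htr : Nᵀ * Xᵀ = (X * N)ᵀ := (transpose_mul X N).symm
  have hid : (X * N + Yᵀ * Gᵀ) * (G + Gᵀ)⁻¹ * (Nᵀ * Xᵀ + G * Y) - (X * N * Y + Yᵀ * Nᵀ * Xᵀ)
      = (X * N - Yᵀ * G) * (G + Gᵀ)⁻¹ * (Nᵀ * Xᵀ - Gᵀ * Y) := by
    rw [htr, Matrix.mul_assoc Yᵀ Nᵀ Xᵀ, ← transpose_mul X N]
    exact aux_sq (X * N) Y G hG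
  refine ⟨hid, ?_⟩
  rw [hid]
  have hSinv : ((G + Gᵀ)⁻¹).PosSemidef := (hG.inv).posSemidef
  have h := hSinv.mul_mul_conjTranspose_same (X * N - Yᵀ * G)
  convert h using 2
  simp [conjTranspose_sub, conjTranspose_mul]
end

section
/- Let Q be an n×n real symmetric matrix, N a p×q real matrix, X⁰, δX n×p real matrices, and Y⁰, δY q×n real matrices. If the (n+q)×(n+q) block matrix [[Q + He(X⁰ N Y⁰) + He(δX N Y⁰) + He(X⁰ N δY), δX N + δYᵀ], [Nᵀ δXᵀ + δY, −2·I]] is negative definite, then Q + He((X⁰ + δX) N (Y⁰ + δY)) is negative definite. -/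
open Matrix

/-- `He A = A + Aᵀ`. -/
def He {n : Type*} (A : Matrix n n ℝ) : Matrix n n ℝ := A + Aᵀ

lemma dp_transpose {m k : ℕ} (M : Matrix (Fin m) (Fin k) ℝ) (x : Fin k → ℝ)
    (y : Fin m → ℝ) : x ⬝ᵥ Mᵀ.mulVec y = y ⬝ᵥ M.mulVec x := by
  rw [mulVec_transpose, dotProduct_comm, dotProduct_mulVec]

/-- ICO step (overbounding with `G = I`): if the LMI in the perturbations
`δX, δY` holds, then the perturbed BMI `Q + He((X⁰+δX) N (Y⁰+δY)) ≺ 0` holds. -/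
theorem stmt_2 {n p q : ℕ}
    (Q : Matrix (Fin n) (Fin n) ℝ) (hQ : Q.IsSymm)
    (N : Matrix (Fin p) (Fin q) ℝ)
    (X₀ δX : Matrix (Fin n) (Fin p) ℝ) (Y₀ δY : Matrix (Fin q) (Fin n) ℝ)
    (h : NegDef (Matrix.fromBlocks
        (Q + He (X₀ * N * Y₀) + He (δX * N * Y₀) + He (X₀ * N * δY))
        (δX * N + δYᵀ)
        (Nᵀ * δXᵀ + δY)
        (-(2 : ℝ) • (1 : Matrix (Fin q) (Fin q) ℝ)))) :
    NegDef (Q + He ((X₀ + δX) * N * (Y₀ + δY))) := by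
  constructor
  · unfold Matrix.IsSymm He at *
    simp [transpose_add, hQ]
    abel
  · intro x hx
    set u : Fin q → ℝ := δY.mulVec x with hu
    have hz : (Sum.elim x u : Fin n ⊕ Fin q → ℝ) ≠ 0 := by
      intro hzero
      apply hx
      funext i
      have := congrFun hzero (Sum.inl i)
      simpa using this
    have key := h.2 (Sum.elim x u) hz
    rw [fromBlocks_mulVec, sumElim_dotProduct_sumElim] at key
    simp only [Sum.elim_comp_inl, Sum.elim_comp_inr] at key
    -- expand everything
    have expand : x ⬝ᵥ ((Q + He (X₀ * N * Y₀) + He (δX * N * Y₀) + He (X₀ * N * δY)).mulVec x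
          + (δX * N + δYᵀ).mulVec u)
        + u ⬝ᵥ ((Nᵀ * δXᵀ + δY).mulVec x + ((-(2:ℝ)) • (1 : Matrix (Fin q) (Fin q) ℝ)).mulVec u)
        = x ⬝ᵥ (Q + He ((X₀ + δX) * N * (Y₀ + δY))).mulVec x := by
      simp only [He, add_mulVec, mulVec_add, dotProduct_add, smul_mulVec, one_mulVec,
        dotProduct_smul, transpose_add, transpose_mul, transpose_transpose, Matrix.add_mul,
        Matrix.mul_add, ← mulVec_mulVec, dp_transpose]
      simp only [hu, ← mulVec_mulVec, dp_transpose, smul_eq_mul]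
      simp only [dotProduct_comm (δY *ᵥ x)]
      rw [dotProduct_comm (Nᵀ *ᵥ (δXᵀ *ᵥ x)) (δY *ᵥ x), dp_transpose,
        dotProduct_comm (δY *ᵥ x) _]
      ring
    rw [expand] at key
    exact key
end

section
/- Let G be a map taking each signal u : ℝ → ℝ^m in L₂e to a signal G(u) : ℝ → ℝ^l in L₂e. Suppose there exist κ > 0 and c ≥ 0 such that for all u ∈ L₂e^m and all T ≥ 0, (∫₀ᵀ ‖(G u)(t)‖² dt)^{1/2} ≤ κ (∫₀ᵀ ‖u(t)‖² dt)^{1/2} + c. Then G is QSR-dissipative with Q = −I (which is negative definite), S = 0, R = 2κ²·I, and dissipation constant β = −2c²: that is, for all u ∈ L₂e^m and all T ≥ 0, ∫₀ᵀ ( −‖(G u)(t)‖² + 2κ² ‖u(t)‖² ) dt ≥ −2c². -/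
open Matrix MeasureTheory

/-- Squared Euclidean norm of a vector, `‖w‖² = Σᵢ wᵢ²`. -/
def sqNorm {n : ℕ} (w : Fin n → ℝ) : ℝ := ∑ i, (w i) ^ 2

/-- A signal is in the extended L₂ space if its squared norm is integrable on
`[0, T]` for every `T ≥ 0`. -/
def L2e {n : ℕ} (w : ℝ → Fin n → ℝ) : Prop :=
  ∀ T ≥ (0 : ℝ), IntervalIntegrable (fun t => sqNorm (w t)) volume 0 T

/-- Necessity direction: an L₂-stable operator is QSR-dissipative with
`Q = −I`, `S = 0`, `R = 2κ²·I` and dissipation constant `β = −2c²`; the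
dissipation inequality reads `∫₀ᵀ (−‖Gu‖² + 2κ²‖u‖²) dt ≥ −2c²`. -/
theorem stmt_10 {l m : ℕ}
    (G : (ℝ → Fin m → ℝ) → (ℝ → Fin l → ℝ))
    (hG : ∀ u, L2e u → L2e (G u))
    (κ c : ℝ) (hκ : 0 < κ) (hc : 0 ≤ c)
    (hstab : ∀ u, L2e u → ∀ T ≥ (0 : ℝ),
      Real.sqrt (∫ t in (0 : ℝ)..T, sqNorm (G u t))
        ≤ κ * Real.sqrt (∫ t in (0 : ℝ)..T, sqNorm (u t)) + c) :
    ∀ u, L2e u → ∀ T ≥ (0 : ℝ),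
      -(2 * c ^ 2) ≤ ∫ t in (0 : ℝ)..T,
        (-(sqNorm (G u t)) + 2 * κ ^ 2 * sqNorm (u t)) := by
  intro u hu T hT
  set A := ∫ t in (0:ℝ)..T, sqNorm (u t) with hA
  set B := ∫ t in (0:ℝ)..T, sqNorm (G u t) with hB
  have hsq : ∀ {n : ℕ} (w : Fin n → ℝ), 0 ≤ sqNorm w := fun w =>
    Finset.sum_nonneg fun i _ => sq_nonneg _
  have hAnn : 0 ≤ A :=
    intervalIntegral.integral_nonneg hT (fun t _ => hsq _)
  have hBnn : 0 ≤ B :=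
    intervalIntegral.integral_nonneg hT (fun t _ => hsq _)
  have hst := hstab u hu T hT
  have hB2 : B ≤ (κ * Real.sqrt A + c) ^ 2 := by
    calc B = Real.sqrt B ^ 2 := (Real.sq_sqrt hBnn).symm
    _ ≤ (κ * Real.sqrt A + c) ^ 2 := by
        apply pow_le_pow_left₀ (Real.sqrt_nonneg _) hst
  have hexp : (κ * Real.sqrt A + c) ^ 2 ≤ 2 * κ ^ 2 * A + 2 * c ^ 2 := by
    have h1 : Real.sqrt A ^ 2 = A := Real.sq_sqrt hAnn
    nlinarith [sq_nonneg (κ * Real.sqrt A - c)]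
  have hIu := hu T hT
  have hIG := hG u hu T hT
  have hsplit : (∫ t in (0:ℝ)..T, (-(sqNorm (G u t)) + 2 * κ ^ 2 * sqNorm (u t)))
      = -B + 2 * κ ^ 2 * A := by
    simp only [neg_add_eq_sub]
    rw [intervalIntegral.integral_sub (hIu.const_mul _) hIG,
      intervalIntegral.integral_const_mul]
  rw [hsplit]
  nlinarith
end

section
/- Let γ > 0, ρ > 0, and let V be a real n×m matrix. Consider the function f(Z) = γ·(if Z ≠ 0 then 1 else 0) + (ρ/2)·‖V − Z‖_F² over real n×m matrices Z, where ‖·‖_F is the Frobenius norm. If ‖V‖_F > √(2γ/ρ), then Z = V is the unique global minimizer of f; if ‖V‖_F < √(2γ/ρ), then Z = 0 is the unique global minimizer of f. -/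
open scoped Classical

/-- Frobenius norm of a real matrix, `‖M‖_F = (Σᵢⱼ Mᵢⱼ²)^{1/2}`. -/
noncomputable def frobNorm {n m : ℕ} (M : Matrix (Fin n) (Fin m) ℝ) : ℝ :=
  Real.sqrt (∑ i, ∑ j, (M i j) ^ 2)

lemma frob_sq {n m : ℕ} (M : Matrix (Fin n) (Fin m) ℝ) :
    (frobNorm M) ^ 2 = ∑ i, ∑ j, (M i j) ^ 2 := by
  apply Real.sq_sqrt
  positivity

lemma frob_sq_pos {n m : ℕ} {M : Matrix (Fin n) (Fin m) ℝ} (h : M ≠ 0) :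
    0 < (frobNorm M) ^ 2 := by
  rw [frob_sq]
  rcases lt_or_eq_of_le (show (0:ℝ) ≤ ∑ i, ∑ j, (M i j) ^ 2 by positivity) with h1 | h1
  · exact h1
  · exfalso; apply h
    ext i j
    have h2 := (Finset.sum_eq_zero_iff_of_nonneg (fun i _ => by positivity)).mp h1.symm i (Finset.mem_univ i)
    have h3 := (Finset.sum_eq_zero_iff_of_nonneg (fun j _ => by positivity)).mp h2 j (Finset.mem_univ j)
    simpa using pow_eq_zero_iff (n := 2) (by norm_num) |>.mp h3

/-- Block hard-thresholding: the exact solution of the Z-update step of the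
ADMM iteration with the cardinality penalty. If `‖V‖_F > √(2γ/ρ)` then `Z = V`
is the unique global minimizer of
`f(Z) = γ·card(‖Z‖_F) + (ρ/2)‖V − Z‖_F²`; if `‖V‖_F < √(2γ/ρ)` then `Z = 0` is
the unique global minimizer. -/
theorem stmt_12 {n m : ℕ} (γ ρ : ℝ) (hγ : 0 < γ) (hρ : 0 < ρ)
    (V : Matrix (Fin n) (Fin m) ℝ)
    (f : Matrix (Fin n) (Fin m) ℝ → ℝ)
    (hf : ∀ Z, f Z = γ * (if Z ≠ 0 then 1 else 0) + ρ / 2 * (frobNorm (V - Z)) ^ 2) :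
    (frobNorm V > Real.sqrt (2 * γ / ρ) →
      ∀ Z, Z ≠ V → f V < f Z) ∧
    (frobNorm V < Real.sqrt (2 * γ / ρ) →
      ∀ Z, Z ≠ 0 → f 0 < f Z) := by
  have hthr : 0 < Real.sqrt (2 * γ / ρ) := Real.sqrt_pos.mpr (by positivity)
  have hfrobnn : ∀ M : Matrix (Fin n) (Fin m) ℝ, 0 ≤ frobNorm M := fun M => Real.sqrt_nonneg _
  constructor
  · intro hV Z hZ
    have hVne : V ≠ 0 := by
      intro h
      rw [h] at hV
      simp [frobNorm] at hV
      linarith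
    have hfV : f V = γ := by
      rw [hf V]
      simp [hVne, frobNorm]
    rw [hfV, hf Z]
    by_cases hZ0 : Z = 0
    · subst hZ0
      simp only [ne_eq, not_true_eq_false, if_neg, if_pos, sub_zero]
      have hV2 : 2 * γ / ρ < (frobNorm V) ^ 2 := by
        have := Real.sq_sqrt (show (0:ℝ) ≤ 2 * γ / ρ by positivity)
        nlinarith [hfrobnn V]
      rw [div_lt_iff₀ hρ] at hV2
      simp [hVne]
      nlinarith
    · have hsub : V - Z ≠ 0 := sub_ne_zero.mpr (Ne.symm hZ)
      have := frob_sq_pos hsub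
      simp only [hZ0, ne_eq, not_false_eq_true, if_pos]
      nlinarith
  · intro hV Z hZ
    have hf0 : f 0 = ρ / 2 * (frobNorm V) ^ 2 := by
      rw [hf 0]; simp
    rw [hf0, hf Z]
    simp only [hZ, ne_eq, not_false_eq_true, if_pos]
    have hV2 : (frobNorm V) ^ 2 < 2 * γ / ρ := by
      have := Real.sq_sqrt (show (0:ℝ) ≤ 2 * γ / ρ by positivity)
      nlinarith [hfrobnn V]
    have h1 : ρ / 2 * (frobNorm V) ^ 2 < γ := by
      rw [lt_div_iff₀ hρ] at hV2
      nlinarith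
    have h2 : 0 ≤ ρ / 2 * (frobNorm (V - Z)) ^ 2 := by positivity
    linarith
end
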